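/- Let r ≥ 2 be an integer, ζ = exp(2πi/r), and let f be the monomial arrangement 𝒜(r,r,3): the 3r forms f((i,j),k) = x_i − ζ^k x_j on ℂ³ indexed by (i,j) ∈ {(1,2),(1,3),(2,3)} and k ∈ ZMod r. Let v₁ = Σ_{k ∈ ZMod r} (e((1,2),k) − e((2,3),k)) and v₂ = Σ_{k ∈ ZMod r} (e((1,3),k) − e((2,3),k)), where e(u) denotes the standard basis vector at index u. Then the span of {v₁, v₂} is 2-dimensional and is contained in the first cohomology support locus: Submodule.span ℂ {v₁, v₂} ⊆ R1_1(f). (This is the essential component of the first characteristic variety of 𝒜(r,r,3), arising from the neighborly partition of the hyperplanes into the three families.) -/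
import Mathlib


/-!
The first cohomology support locus of the Orlik–Solomon algebra of the monomial
arrangement `𝒜(r,r,3)` (for `r ≥ 4`, `3 ∤ r`): it is the union of the three
"local" components `T_{ij}` coming from the points of multiplicity `r`, and of
the two-dimensional components `S(q,a,b)` indexed by positive divisors `q ∣ r`
and `a, b ∈ ZMod r`.

The index set of the arrangement is `Fin 3 × ZMod r`, where the first
coordinate `0, 1, 2` corresponds to the pair `(1,2), (1,3), (2,3)` respectively.
-/

noncomputable section

open Module

/-- Degree-2 part of the Orlik–Solomon ideal (span over pairwise distinct triples
with linearly dependent forms; this agrees with the span over ordered triples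
`i < j < k` since the spanning element is alternating in `(i,j,k)`). -/
def osI2 {I : Type*} [DecidableEq I] {ℓ : ℕ}
    (f : I → ((Fin ℓ → ℂ) →ₗ[ℂ] ℂ)) :
    Submodule ℂ (ExteriorAlgebra ℂ (I → ℂ)) :=
  Submodule.span ℂ
    { x | ∃ i j k : I, i ≠ j ∧ i ≠ k ∧ j ≠ k ∧
        ¬ LinearIndependent ℂ ![f i, f j, f k] ∧
        x = ExteriorAlgebra.ι ℂ (Pi.single j 1 : I → ℂ) *
              ExteriorAlgebra.ι ℂ (Pi.single k 1 : I → ℂ)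
          - ExteriorAlgebra.ι ℂ (Pi.single i 1 : I → ℂ) *
              ExteriorAlgebra.ι ℂ (Pi.single k 1 : I → ℂ)
          + ExteriorAlgebra.ι ℂ (Pi.single i 1 : I → ℂ) *
              ExteriorAlgebra.ι ℂ (Pi.single j 1 : I → ℂ) }

/-- `K(λ) = {η | ω(λ) ∧ ω(η) ∈ I₂(f)}`. -/
def osK {I : Type*} [DecidableEq I] {ℓ : ℕ}
    (f : I → ((Fin ℓ → ℂ) →ₗ[ℂ] ℂ)) (lam : I → ℂ) :
    Submodule ℂ (I → ℂ) :=
  (osI2 f).comap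
    ((LinearMap.mulLeft ℂ (ExteriorAlgebra.ι ℂ lam)).comp (ExteriorAlgebra.ι ℂ))

/-- The `k`-th cohomology support locus of the Orlik–Solomon algebra of `f`. -/
def osR1 {I : Type*} [Fintype I] [DecidableEq I] {ℓ : ℕ}
    (f : I → ((Fin ℓ → ℂ) →ₗ[ℂ] ℂ)) (k : ℕ) : Set (I → ℂ) :=
  { lam | letI := Classical.dec (lam = 0);
      k ≤ finrank ℂ (osK f lam) - (if lam = 0 then 0 else 1) }

section AuxLemmas

variable {r : ℕ} [NeZero r]

private lemma aux_dep (ζ : ℂ) (hζr : ζ ^ r = 1)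
    (f : Fin 3 × ZMod r → ((Fin 3 → ℂ) →ₗ[ℂ] ℂ))
    (hf : ∀ k : ZMod r,
      f (0, k) = (LinearMap.proj 0 : (Fin 3 → ℂ) →ₗ[ℂ] ℂ) -
        ζ ^ k.val • LinearMap.proj 1 ∧
      f (1, k) = (LinearMap.proj 0 : (Fin 3 → ℂ) →ₗ[ℂ] ℂ) -
        ζ ^ k.val • LinearMap.proj 2 ∧
      f (2, k) = (LinearMap.proj 1 : (Fin 3 → ℂ) →ₗ[ℂ] ℂ) -
        ζ ^ k.val • LinearMap.proj 2)
    (k m : ZMod r) :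
    ¬ LinearIndependent ℂ ![f (0, k), f (1, m), f (2, m - k)] := by
  intro h
  rw [Fintype.linearIndependent_iff] at h
  have hm : ζ ^ k.val * ζ ^ (m - k).val = ζ ^ m.val := by
    rw [← pow_add]
    have h1 : ζ ^ (k.val + (m - k).val) = ζ ^ ((k + (m - k)).val) := by
      rw [ZMod.val_add]
      conv_lhs => rw [← Nat.mod_add_div (k.val + (m - k).val) r]
      rw [pow_add, pow_mul, hζr, one_pow, mul_one]
    rw [h1, show k + (m - k) = m from by ring]
  have hrel : ∑ i : Fin 3, ![(1 : ℂ), -1, ζ ^ k.val] i •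
      ![f (0, k), f (1, m), f (2, m - k)] i = 0 := by
    rw [Fin.sum_univ_three]
    simp only [Matrix.cons_val_zero, Matrix.cons_val_one, Matrix.head_cons,
      Matrix.cons_val_two, Matrix.tail_cons]
    rw [(hf k).1, (hf m).2.1, (hf (m - k)).2.2]
    refine LinearMap.ext fun x => ?_
    simp only [LinearMap.add_apply, LinearMap.smul_apply, LinearMap.sub_apply,
      LinearMap.proj_apply, LinearMap.zero_apply, LinearMap.neg_apply,
      smul_eq_mul, one_smul, neg_smul]
    linear_combination (-(x 2)) * hm
  have h0 := h _ hrel 0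
  simp at h0

private lemma aux_identity (v₁ v₂ : Fin 3 × ZMod r → ℂ)
    (hv₁ : v₁ = ∑ k : ZMod r,
      ((Pi.single ((0 : Fin 3), k) 1 : Fin 3 × ZMod r → ℂ) -
        Pi.single ((2 : Fin 3), k) 1))
    (hv₂ : v₂ = ∑ k : ZMod r,
      ((Pi.single ((1 : Fin 3), k) 1 : Fin 3 × ZMod r → ℂ) -
        Pi.single ((2 : Fin 3), k) 1)) :
    ExteriorAlgebra.ι ℂ v₁ * ExteriorAlgebra.ι ℂ v₂
      = ∑ k : ZMod r, ∑ m : ZMod r,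
        (ExteriorAlgebra.ι ℂ (Pi.single ((1:Fin 3), m) 1 : Fin 3 × ZMod r → ℂ) *
            ExteriorAlgebra.ι ℂ (Pi.single ((2:Fin 3), m - k) 1 : Fin 3 × ZMod r → ℂ)
          - ExteriorAlgebra.ι ℂ (Pi.single ((0:Fin 3), k) 1 : Fin 3 × ZMod r → ℂ) *
            ExteriorAlgebra.ι ℂ (Pi.single ((2:Fin 3), m - k) 1 : Fin 3 × ZMod r → ℂ)
          + ExteriorAlgebra.ι ℂ (Pi.single ((0:Fin 3), k) 1 : Fin 3 × ZMod r → ℂ) *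
            ExteriorAlgebra.ι ℂ (Pi.single ((1:Fin 3), m) 1 : Fin 3 × ZMod r → ℂ)) := by
  set w0 : Fin 3 × ZMod r → ℂ := ∑ k : ZMod r, Pi.single ((0 : Fin 3), k) 1 with hw0
  set w1 : Fin 3 × ZMod r → ℂ := ∑ k : ZMod r, Pi.single ((1 : Fin 3), k) 1 with hw1
  set w2 : Fin 3 × ZMod r → ℂ := ∑ k : ZMod r, Pi.single ((2 : Fin 3), k) 1 with hw2
  have hW0 : ExteriorAlgebra.ι ℂ w0 = ∑ k : ZMod r,
      ExteriorAlgebra.ι ℂ (Pi.single ((0:Fin 3), k) 1 : Fin 3 × ZMod r → ℂ) := map_sum _ _ _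
  have hW1 : ExteriorAlgebra.ι ℂ w1 = ∑ k : ZMod r,
      ExteriorAlgebra.ι ℂ (Pi.single ((1:Fin 3), k) 1 : Fin 3 × ZMod r → ℂ) := map_sum _ _ _
  have hW2 : ExteriorAlgebra.ι ℂ w2 = ∑ k : ZMod r,
      ExteriorAlgebra.ι ℂ (Pi.single ((2:Fin 3), k) 1 : Fin 3 × ZMod r → ℂ) := map_sum _ _ _
  have hv1' : v₁ = w0 - w2 := by rw [hv₁, Finset.sum_sub_distrib]
  have hv2' : v₂ = w1 - w2 := by rw [hv₂, Finset.sum_sub_distrib]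
  have h01 : ∑ k : ZMod r, ∑ m : ZMod r,
      ExteriorAlgebra.ι ℂ (Pi.single ((0:Fin 3), k) 1 : Fin 3 × ZMod r → ℂ) *
        ExteriorAlgebra.ι ℂ (Pi.single ((1:Fin 3), m) 1 : Fin 3 × ZMod r → ℂ)
      = ExteriorAlgebra.ι ℂ w0 * ExteriorAlgebra.ι ℂ w1 := by
    rw [hW0, hW1, Finset.sum_mul_sum]
  have h02 : ∑ k : ZMod r, ∑ m : ZMod r,
      ExteriorAlgebra.ι ℂ (Pi.single ((0:Fin 3), k) 1 : Fin 3 × ZMod r → ℂ) *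
        ExteriorAlgebra.ι ℂ (Pi.single ((2:Fin 3), m - k) 1 : Fin 3 × ZMod r → ℂ)
      = ExteriorAlgebra.ι ℂ w0 * ExteriorAlgebra.ι ℂ w2 := by
    rw [hW0, hW2, Finset.sum_mul_sum]
    refine Finset.sum_congr rfl fun k _ =>
      Finset.sum_equiv (Equiv.subRight k) (by simp) ?_
    intro m _
    simp [Equiv.subRight]
  have h12 : ∑ k : ZMod r, ∑ m : ZMod r,
      ExteriorAlgebra.ι ℂ (Pi.single ((1:Fin 3), m) 1 : Fin 3 × ZMod r → ℂ) *
        ExteriorAlgebra.ι ℂ (Pi.single ((2:Fin 3), m - k) 1 : Fin 3 × ZMod r → ℂ)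
      = ExteriorAlgebra.ι ℂ w1 * ExteriorAlgebra.ι ℂ w2 := by
    rw [Finset.sum_comm, hW1, hW2, Finset.sum_mul_sum]
    refine Finset.sum_congr rfl fun m _ =>
      Finset.sum_equiv (Equiv.subLeft m) (by simp) ?_
    intro k _
    simp [Equiv.subLeft]
  have hsw : ExteriorAlgebra.ι ℂ w2 * ExteriorAlgebra.ι ℂ w1
      = -(ExteriorAlgebra.ι ℂ w1 * ExteriorAlgebra.ι ℂ w2) :=
    eq_neg_of_add_eq_zero_left
      (by rw [add_comm]; exact ExteriorAlgebra.ι_add_mul_swap w1 w2)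
  simp only [Finset.sum_add_distrib, Finset.sum_sub_distrib, h01, h02, h12]
  rw [hv1', hv2', map_sub, map_sub, sub_mul, mul_sub, mul_sub,
    ExteriorAlgebra.ι_sq_zero, hsw]
  abel

private lemma aux_mem_osK (f : Fin 3 × ZMod r → ((Fin 3 → ℂ) →ₗ[ℂ] ℂ))
    (lam u : Fin 3 × ZMod r → ℂ)
    (hu : ExteriorAlgebra.ι ℂ lam * ExteriorAlgebra.ι ℂ u ∈ osI2 f) :
    u ∈ osK f lam := by
  rw [osK, Submodule.mem_comap, LinearMap.comp_apply, LinearMap.mulLeft_apply]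
  exact hu

end AuxLemmas

/-- The essential component of the first characteristic variety of `𝒜(r,r,3)`:
the span of `v₁ = ∑ₖ (e((1,2),k) − e((2,3),k))` and `v₂ = ∑ₖ (e((1,3),k) − e((2,3),k))`
is a 2-dimensional subspace contained in `R¹₁(f)`.  The index set of the
arrangement is `Fin 3 × ZMod r`, where `0, 1, 2` correspond to
`(1,2), (1,3), (2,3)`. -/
theorem essential_torus_monomial_rr3 (r : ℕ) [NeZero r] (hr : 2 ≤ r)
    (ζ : ℂ) (hζ : ζ = Complex.exp (2 * Real.pi * Complex.I / r))
    (f : Fin 3 × ZMod r → ((Fin 3 → ℂ) →ₗ[ℂ] ℂ))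
    (hf : ∀ k : ZMod r,
      f (0, k) = (LinearMap.proj 0 : (Fin 3 → ℂ) →ₗ[ℂ] ℂ) -
        ζ ^ k.val • LinearMap.proj 1 ∧
      f (1, k) = (LinearMap.proj 0 : (Fin 3 → ℂ) →ₗ[ℂ] ℂ) -
        ζ ^ k.val • LinearMap.proj 2 ∧
      f (2, k) = (LinearMap.proj 1 : (Fin 3 → ℂ) →ₗ[ℂ] ℂ) -
        ζ ^ k.val • LinearMap.proj 2)
    (v₁ v₂ : Fin 3 × ZMod r → ℂ)
    (hv₁ : v₁ = ∑ k : ZMod r,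
      ((Pi.single ((0 : Fin 3), k) 1 : Fin 3 × ZMod r → ℂ) -
        Pi.single ((2 : Fin 3), k) 1))
    (hv₂ : v₂ = ∑ k : ZMod r,
      ((Pi.single ((1 : Fin 3), k) 1 : Fin 3 × ZMod r → ℂ) -
        Pi.single ((2 : Fin 3), k) 1)) :
    finrank ℂ (Submodule.span ℂ {v₁, v₂}) = 2 ∧
      (Submodule.span ℂ {v₁, v₂} : Set (Fin 3 × ZMod r → ℂ)) ⊆ osR1 f 1 := by
  classical
  have hrC : (r : ℂ) ≠ 0 := Nat.cast_ne_zero.2 (NeZero.ne r)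
  have hζr : ζ ^ r = 1 := by
    rw [hζ, ← Complex.exp_nat_mul]
    have : (r : ℂ) * (2 * Real.pi * Complex.I / r) = 2 * Real.pi * Complex.I := by
      field_simp
    rw [this, Complex.exp_two_pi_mul_I]
  have hdep : ∀ k m : ZMod r,
      ¬ LinearIndependent ℂ ![f (0, k), f (1, m), f (2, m - k)] :=
    fun k m => aux_dep ζ hζr f hf k m
  -- the spanning generators of osI2 for these triples
  have hgen : ∀ k m : ZMod r,
      ExteriorAlgebra.ι ℂ (Pi.single ((1:Fin 3), m) 1 : Fin 3 × ZMod r → ℂ) *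
          ExteriorAlgebra.ι ℂ (Pi.single ((2:Fin 3), m - k) 1 : Fin 3 × ZMod r → ℂ)
        - ExteriorAlgebra.ι ℂ (Pi.single ((0:Fin 3), k) 1 : Fin 3 × ZMod r → ℂ) *
          ExteriorAlgebra.ι ℂ (Pi.single ((2:Fin 3), m - k) 1 : Fin 3 × ZMod r → ℂ)
        + ExteriorAlgebra.ι ℂ (Pi.single ((0:Fin 3), k) 1 : Fin 3 × ZMod r → ℂ) *
          ExteriorAlgebra.ι ℂ (Pi.single ((1:Fin 3), m) 1 : Fin 3 × ZMod r → ℂ)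
        ∈ osI2 f := by
    intro k m
    refine Submodule.subset_span ?_
    refine ⟨((0:Fin 3), k), ((1:Fin 3), m), ((2:Fin 3), m - k), ?_, ?_, ?_, hdep k m, rfl⟩
    · exact fun h => absurd (congrArg Prod.fst h) (show ¬ (0:Fin 3) = 1 by decide)
    · exact fun h => absurd (congrArg Prod.fst h) (show ¬ (0:Fin 3) = 2 by decide)
    · exact fun h => absurd (congrArg Prod.fst h) (show ¬ (1:Fin 3) = 2 by decide)
  -- the key algebraic identity and membership
  have key : ExteriorAlgebra.ι ℂ v₁ * ExteriorAlgebra.ι ℂ v₂ ∈ osI2 f := by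
    have hι : ExteriorAlgebra.ι ℂ v₁ * ExteriorAlgebra.ι ℂ v₂
        = ∑ k : ZMod r, ∑ m : ZMod r,
          (ExteriorAlgebra.ι ℂ (Pi.single ((1:Fin 3), m) 1 : Fin 3 × ZMod r → ℂ) *
              ExteriorAlgebra.ι ℂ (Pi.single ((2:Fin 3), m - k) 1 : Fin 3 × ZMod r → ℂ)
            - ExteriorAlgebra.ι ℂ (Pi.single ((0:Fin 3), k) 1 : Fin 3 × ZMod r → ℂ) *
              ExteriorAlgebra.ι ℂ (Pi.single ((2:Fin 3), m - k) 1 : Fin 3 × ZMod r → ℂ)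
            + ExteriorAlgebra.ι ℂ (Pi.single ((0:Fin 3), k) 1 : Fin 3 × ZMod r → ℂ) *
              ExteriorAlgebra.ι ℂ (Pi.single ((1:Fin 3), m) 1 : Fin 3 × ZMod r → ℂ)) :=
      aux_identity v₁ v₂ hv₁ hv₂
    rw [hι]
    exact Submodule.sum_mem _ fun k _ => Submodule.sum_mem _ fun m _ => hgen k m
  have hsw12 : ExteriorAlgebra.ι ℂ v₂ * ExteriorAlgebra.ι ℂ v₁
      = -(ExteriorAlgebra.ι ℂ v₁ * ExteriorAlgebra.ι ℂ v₂) :=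
    eq_neg_of_add_eq_zero_left
      (by rw [add_comm]; exact ExteriorAlgebra.ι_add_mul_swap v₁ v₂)
  -- span {v₁, v₂} ≤ osK f lam for every lam in the span
  have hle : ∀ lam ∈ Submodule.span ℂ ({v₁, v₂} : Set (Fin 3 × ZMod r → ℂ)),
      Submodule.span ℂ ({v₁, v₂} : Set (Fin 3 × ZMod r → ℂ)) ≤ osK f lam := by
    intro lam hlam
    obtain ⟨a, b, hab⟩ := Submodule.mem_span_pair.1 hlam
    have hmem : ∀ u : Fin 3 × ZMod r → ℂ,
        ExteriorAlgebra.ι ℂ lam * ExteriorAlgebra.ι ℂ u ∈ osI2 f → u ∈ osK f lam :=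
      aux_mem_osK f lam
    have h1 : v₁ ∈ osK f lam := by
      refine hmem v₁ ?_
      have : ExteriorAlgebra.ι ℂ lam * ExteriorAlgebra.ι ℂ v₁
          = (-b) • (ExteriorAlgebra.ι ℂ v₁ * ExteriorAlgebra.ι ℂ v₂) := by
        rw [← hab, map_add, map_smul, map_smul, add_mul, smul_mul_assoc,
          smul_mul_assoc, ExteriorAlgebra.ι_sq_zero, hsw12, smul_zero, zero_add,
          smul_neg, neg_smul]
      rw [this]
      exact Submodule.smul_mem _ _ key
    have h2 : v₂ ∈ osK f lam := by
      refine hmem v₂ ?_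
      have : ExteriorAlgebra.ι ℂ lam * ExteriorAlgebra.ι ℂ v₂
          = a • (ExteriorAlgebra.ι ℂ v₁ * ExteriorAlgebra.ι ℂ v₂) := by
        rw [← hab, map_add, map_smul, map_smul, add_mul, smul_mul_assoc,
          smul_mul_assoc, ExteriorAlgebra.ι_sq_zero, smul_zero, add_zero]
      rw [this]
      exact Submodule.smul_mem _ _ key
    exact Submodule.span_le.2 (Set.insert_subset_iff.2 ⟨h1, Set.singleton_subset_iff.2 h2⟩)
  -- evaluations
  have hval1 : v₁ ((0:Fin 3), 0) = 1 ∧ v₂ ((0:Fin 3), 0) = 0 := by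
    constructor
    · rw [hv₁, Finset.sum_apply]
      simp [Pi.single_apply, Prod.ext_iff]
    · rw [hv₂, Finset.sum_apply]
      simp [Pi.single_apply, Prod.ext_iff]
  have hval2 : v₁ ((1:Fin 3), 0) = 0 ∧ v₂ ((1:Fin 3), 0) = 1 := by
    constructor
    · rw [hv₁, Finset.sum_apply]
      simp [Pi.single_apply, Prod.ext_iff]
    · rw [hv₂, Finset.sum_apply]
      simp [Pi.single_apply, Prod.ext_iff]
  have hli : LinearIndependent ℂ ![v₁, v₂] := by
    rw [LinearIndependent.pair_iff]
    intro s t hst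
    constructor
    · have h := congrFun hst ((0:Fin 3), 0)
      rw [Pi.add_apply, Pi.smul_apply, Pi.smul_apply, hval1.1, hval1.2,
        Pi.zero_apply, smul_eq_mul, smul_eq_mul, mul_one, mul_zero, add_zero] at h
      exact h
    · have h := congrFun hst ((1:Fin 3), 0)
      rw [Pi.add_apply, Pi.smul_apply, Pi.smul_apply, hval2.1, hval2.2,
        Pi.zero_apply, smul_eq_mul, smul_eq_mul, mul_one, mul_zero, zero_add] at h
      exact h
  have hrank : finrank ℂ (Submodule.span ℂ ({v₁, v₂} : Set (Fin 3 × ZMod r → ℂ))) = 2 := by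
    have hrange : Set.range ![v₁, v₂] = {v₁, v₂} := by
      ext x; simp [Fin.exists_fin_two, or_comm]
    rw [← hrange, finrank_span_eq_card hli, Fintype.card_fin]
  refine ⟨hrank, ?_⟩
  intro lam hlam
  have h2 : 2 ≤ finrank ℂ (osK f lam) := by
    rw [← hrank]
    exact Submodule.finrank_mono (hle lam hlam)
  simp only [osR1, Set.mem_setOf_eq]
  split_ifs <;> omega
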